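/- Case (V), uniqueness: If η, η' are characters of Γ with η|_Λ = η'|_Λ = ξ and the case-V representations L(η) and L(η') are isomorphic (via a linear isomorphism intertwining X, Y and every ρ(h)), then η = η'·χ₁^m for some integer m. -/

import Mathlib

noncomputable section

/-- `(V, ρ, X, Y)` is a representation of the common part of the rank-2 algebra `A(ξ)`:
`ρ` is a group homomorphism (recorded via multiplicativity and unitality),
`ρ(h)∘X = χ₁(h)·(X∘ρ(h))` and `ρ(h)∘Y = χ₂(h)·(Y∘ρ(h))` for all `h ∈ Γ`, and
`ρ(g) = ξ(g)·id` for all `g ∈ Λ`. -/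
def IsRep {Γ : Type*} [CommGroup Γ] (χ₁ χ₂ : Γ →* ℂˣ) (Λ : Subgroup Γ) (ξ : ↥Λ →* ℂˣ)
    {V : Type*} [AddCommGroup V] [Module ℂ V]
    (ρ : Γ → Module.End ℂ V) (X Y : Module.End ℂ V) : Prop :=
  (∀ a b : Γ, ρ (a * b) = ρ a * ρ b) ∧ ρ 1 = 1 ∧
  (∀ h : Γ, ρ h * X = (χ₁ h : ℂ) • (X * ρ h)) ∧
  (∀ h : Γ, ρ h * Y = (χ₂ h : ℂ) • (Y * ρ h)) ∧
  ∀ g : Λ, ρ (g : Γ) = (ξ g : ℂ) • (1 : Module.End ℂ V)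

/-- A subspace `W` is stable under `X`, `Y` and all `ρ(h)`. -/
def Stable2 {Γ : Type*} {V : Type*} [AddCommGroup V] [Module ℂ V]
    (ρ : Γ → Module.End ℂ V) (X Y : Module.End ℂ V) (W : Submodule ℂ V) : Prop :=
  (∀ v ∈ W, X v ∈ W) ∧ (∀ v ∈ W, Y v ∈ W) ∧ ∀ h : Γ, ∀ v ∈ W, ρ h v ∈ W

/-- Irreducibility: `V ≠ 0` and the only subspaces stable under `X`, `Y` and all `ρ(h)`
are `0` and `V`. -/
def Irred2 {Γ : Type*} {V : Type*} [AddCommGroup V] [Module ℂ V]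
    (ρ : Γ → Module.End ℂ V) (X Y : Module.End ℂ V) : Prop :=
  (∃ v : V, v ≠ 0) ∧ ∀ W : Submodule ℂ V, Stable2 ρ X Y W → W = ⊥ ∨ W = ⊤

/-- The sequence `c_i` defined by `c₀ = c` and
`c_i = q·(c_{i−1} + ν − ν·q^{2(i−1)}·γ)` for `i ≥ 1`. -/
def cseq (q ν γ c : ℂ) : ℕ → ℂ
  | 0 => c
  | i + 1 => q * (cseq q ν γ c i + ν - ν * q ^ (2 * i) * γ)

/-- `(V, ρ, X, Y)` is a case-V representation: a representation with in addition
`X^r = id`, `Y^r = 0` and `X∘Y = q⁻¹·(Y∘X) + ρ(g₁g₂) − id`, where `q = χ₁(g₁)`. -/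
def IsRepV {Γ : Type*} [CommGroup Γ] (g₁ g₂ : Γ) (χ₁ χ₂ : Γ →* ℂˣ)
    (Λ : Subgroup Γ) (ξ : ↥Λ →* ℂˣ) (r : ℕ)
    {V : Type*} [AddCommGroup V] [Module ℂ V]
    (ρ : Γ → Module.End ℂ V) (X Y : Module.End ℂ V) : Prop :=
  IsRep χ₁ χ₂ Λ ξ ρ X Y ∧ X ^ r = 1 ∧ Y ^ r = 0 ∧
    X * Y = (((χ₁ g₁ : ℂˣ) : ℂ))⁻¹ • (Y * X) + ρ (g₁ * g₂) - 1

/-- The action of `h ∈ Γ` on `L(η)`, with `ρ(h)·f_i = η(h)·χ₁(h)^i·f_i` on the basis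
`(f_i)_{i ∈ ℤ/rℤ}` of `ℤ/rℤ → ℂ`. -/
def wRho (r : ℕ) {Γ : Type*} [CommGroup Γ] (χ₁ η : Γ →* ℂˣ) (h : Γ) :
    Module.End ℂ (ZMod r → ℂ) where
  toFun v := fun i => (η h : ℂ) * (χ₁ h : ℂ) ^ i.val * v i
  map_add' v w := by funext i; simp [mul_add]
  map_smul' a v := by funext i; simp [smul_eq_mul]; ring

/-- The operator `X` on `L(η)`, with `X·f_i = f_{i+1}` (indices modulo `r`). -/
def wX (r : ℕ) : Module.End ℂ (ZMod r → ℂ) where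
  toFun v := fun i => v (i - 1)
  map_add' _ _ := rfl
  map_smul' _ _ := rfl

/-- The operator `Y` on `L(η)`, with `Y·f_i = c_i·f_{i−1}` (indices modulo `r`,
the index of `c` being read off via the canonical representative in `{0, …, r−1}`). -/
def wY (r : ℕ) (cs : ℕ → ℂ) : Module.End ℂ (ZMod r → ℂ) where
  toFun v := fun j => cs ((j + 1 : ZMod r).val) * v (j + 1)
  map_add' v w := by funext j; simp [mul_add]
  map_smul' a v := by funext j; simp [smul_eq_mul]; ring

/-- Case (V), uniqueness: if `η, η'` are characters of `Γ` restricting to `ξ` on `Λ` and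
the case-V representations `L(η)` and `L(η')` are isomorphic via a linear isomorphism
intertwining `X`, `Y` and every `ρ(h)`, then `η = η'·χ₁^m` for some integer `m`. -/
theorem caseV_uniqueness {Γ : Type*} [CommGroup Γ] [Fintype Γ] (g₁ g₂ : Γ)
    (χ₁ χ₂ : Γ →* ℂˣ) (hχ₂ : χ₂ = χ₁⁻¹) (h12 : χ₁ g₂ * χ₂ g₁ = 1)
    (r : ℕ) (hr : 1 < r) (hord : orderOf χ₁ = r)
    (hq : IsPrimitiveRoot ((χ₁ g₁ : ℂˣ) : ℂ) r)
    (Λ : Subgroup Γ) (hΛ : ∀ g : Γ, g ∈ Λ ↔ (χ₁ g = 1 ∧ χ₂ g = 1)) (ξ : ↥Λ →* ℂˣ)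
    (η η' : Γ →* ℂˣ) (hη : ∀ g : Λ, η (g : Γ) = ξ g) (hη' : ∀ g : Λ, η' (g : Γ) = ξ g)
    (φ : (ZMod r → ℂ) ≃ₗ[ℂ] (ZMod r → ℂ))
    (hφX : ∀ v : ZMod r → ℂ, φ (wX r v) = wX r (φ v))
    (hφY : ∀ v : ZMod r → ℂ,
      φ (wY r (cseq ((χ₁ g₁ : ℂˣ) : ℂ) 1 ((η (g₁ * g₂) : ℂˣ) : ℂ) 0) v) =
        wY r (cseq ((χ₁ g₁ : ℂˣ) : ℂ) 1 ((η' (g₁ * g₂) : ℂˣ) : ℂ) 0) (φ v))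
    (hφρ : ∀ (h : Γ) (v : ZMod r → ℂ), φ (wRho r χ₁ η h v) = wRho r χ₁ η' h (φ v)) :
    ∃ m : ℤ, η = η' * χ₁ ^ m := by

  classical
  set e0 : ZMod r → ℂ := Pi.single (0 : ZMod r) 1 with he0
  have he0ne : e0 ≠ 0 := by
    intro h
    have := congrFun h 0
    simp [he0, Pi.single_eq_same] at this
  have hφe0 : φ e0 ≠ 0 := by
    intro h
    exact he0ne (φ.injective (by simpa using h))
  obtain ⟨i, hi⟩ : ∃ i, φ e0 i ≠ 0 := by
    by_contra h
    push_neg at h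
    exact hφe0 (funext h)
  have key : ∀ h : Γ, (η h : ℂ) = (η' h : ℂ) * (χ₁ h : ℂ) ^ i.val := by
    intro h
    have he : wRho r χ₁ η h e0 = (η h : ℂ) • e0 := by
      funext j
      by_cases hj : j = (0 : ZMod r)
      · subst hj
        simp [wRho, he0, Pi.single_eq_same]
      · simp [wRho, he0, Pi.single_eq_of_ne hj]
    have := hφρ h e0
    rw [he, map_smul] at this
    have h2 := congrFun this.symm i
    simp only [wRho, LinearMap.coe_mk, AddHom.coe_mk, Pi.smul_apply, smul_eq_mul] at h2
    have h3 : (η' h : ℂ) * (χ₁ h : ℂ) ^ i.val * φ e0 i = (η h : ℂ) * φ e0 i := by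
      linear_combination h2
    exact (mul_right_cancel₀ hi h3).symm
  refine ⟨(i.val : ℤ), ?_⟩
  ext h
  have hz : (χ₁ ^ (i.val : ℤ)) h = (χ₁ h) ^ i.val := by
    erw [zpow_natCast]
    rfl
  simp only [MonoidHom.mul_apply, Units.val_mul, hz, Units.val_pow_eq_pow_val]
  exact key h
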